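/- Let G be an undirected graph and x, y, z three distinct vertices. Construct G̃ from G by subdividing every edge with one new vertex, splitting z into two copies z₁, z₂ each adjacent (via the subdivided structure) to the same neighbors as z, and adding a new edge {z₁, z₂}. Then a cycle in G̃ has odd length if and only if it contains the edge {z₁, z₂}; consequently, there is a cycle in G through all of x, y, z if and only if there is an odd cycle in G̃ through both x and y. -/

import Mathlib

/-- The vertex type of the auxiliary graph `G̃`: pairs `(v, b)` where `(v, false)`
is the standard copy of an original vertex `v` (and `(z, true)` is the second
copy of the split vertex `z`), together with one subdivision vertex for each
edge of `G`. -/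
def TildeVert (V : Type*) (G : SimpleGraph V) : Type _ :=
  (V × Bool) ⊕ G.edgeSet

/-- The base relation of the auxiliary graph: a copy of an original vertex is
joined to the subdivision vertex of each incident edge (both copies of `z` are
joined to the subdivision vertices of the edges incident to `z`), and the two
copies of `z` are joined by an extra edge. -/
def tildeRel {V : Type*} (G : SimpleGraph V) (z : V) :
    TildeVert V G → TildeVert V G → Prop
  | Sum.inl (u, b), Sum.inl (u', b') => u = z ∧ u' = z ∧ b ≠ b'
  | Sum.inl (u, b), Sum.inr e => u ∈ e.val ∧ (u ≠ z → b = false)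
  | Sum.inr _, _ => False

/-- The auxiliary graph `G̃` obtained from `G` by subdividing every edge,
splitting `z` into two copies, and adding an edge between the two copies. -/
def tildeGraph {V : Type*} (G : SimpleGraph V) (z : V) :
    SimpleGraph (TildeVert V G) :=
  SimpleGraph.fromRel (tildeRel G z)

namespace Stmt16Aux

open SimpleGraph Walk

variable {V : Type*} {G : SimpleGraph V} {z : V}

attribute [reducible] TildeVert

lemma adj_inl_inl {u u' : V} {b b' : Bool} :
    (tildeGraph G z).Adj (Sum.inl (u, b)) (Sum.inl (u', b')) ↔ u = z ∧ u' = z ∧ b ≠ b' := by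
  rw [tildeGraph, SimpleGraph.fromRel_adj]
  constructor
  · rintro ⟨-, h | h⟩
    · exact ⟨h.1, h.2.1, h.2.2⟩
    · exact ⟨h.2.1, h.1, (h.2.2).symm⟩
  · rintro ⟨h1, h2, h3⟩
    refine ⟨?_, Or.inl ⟨h1, h2, h3⟩⟩
    intro hc
    apply h3
    have : (u, b) = (u', b') := Sum.inl.inj hc
    exact congrArg Prod.snd this

lemma adj_inl_inr {u : V} {b : Bool} {e : G.edgeSet} :
    (tildeGraph G z).Adj (Sum.inl (u, b)) (Sum.inr e) ↔ u ∈ e.val ∧ (u ≠ z → b = false) := by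
  rw [tildeGraph, SimpleGraph.fromRel_adj]
  constructor
  · rintro ⟨-, h | h⟩
    · exact h
    · exact h.elim
  · intro h
    exact ⟨by simp, Or.inl h⟩

lemma not_adj_inr_inr {e e' : G.edgeSet} :
    ¬ (tildeGraph G z).Adj (Sum.inr e) (Sum.inr e') := by
  rw [tildeGraph, SimpleGraph.fromRel_adj]
  rintro ⟨-, h | h⟩ <;> exact h

/-- parity labelling -/
def gp : TildeVert V G → ZMod 2 := fun m => Sum.elim (fun _ => 0) (fun _ => 1) m

lemma gp_self_add (a : TildeVert V G) : gp a + gp a = 0 := by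
  rcases a with a | a <;> simp [gp] <;> decide

lemma adj_mixed {a b : TildeVert V G} (h : (tildeGraph G z).Adj a b)
    (hne : s(a, b) ≠ s(Sum.inl (z, false), Sum.inl (z, true))) : gp a + gp b = 1 := by
  rcases a with ⟨u, bu⟩ | e
  · rcases b with ⟨u', bu'⟩ | e'
    · exfalso
      obtain ⟨rfl, rfl, hb⟩ := adj_inl_inl.mp h
      apply hne
      rcases bu with _ | _ <;> rcases bu' with _ | _ <;> simp_all
    · simp [gp]
  · rcases b with ⟨u', bu'⟩ | e'
    · simp [gp]
    · exact absurd h not_adj_inr_inr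

lemma parity_no {u v : TildeVert V G} (p : (tildeGraph G z).Walk u v)
    (hz : s(Sum.inl (z, false), Sum.inl (z, true)) ∉ p.edges) :
    (p.length : ZMod 2) = gp u + gp v := by
  induction p with
  | nil =>
    simp only [Walk.length_nil, Nat.cast_zero]
    exact (gp_self_add _).symm
  | @cons a b c h q ih =>
    rw [Walk.edges_cons, List.mem_cons, not_or] at hz
    have h1 : gp a + gp b = 1 := adj_mixed h (fun hc => hz.1 hc.symm)
    have := ih hz.2
    rw [Walk.length_cons]
    push_cast
    rw [this]
    have : (gp a + gp b) + (gp b + gp c) = 1 + (gp b + gp c) := by rw [h1]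
    calc (gp b + gp c : ZMod 2) + 1 = gp a + (gp b + gp b) + gp c := by
          rw [← h1]; ring
      _ = gp a + gp c := by rw [gp_self_add]; ring

lemma parity_yes {u v : TildeVert V G} (p : (tildeGraph G z).Walk u v)
    (hp : p.IsTrail)
    (hz : s(Sum.inl (z, false), Sum.inl (z, true)) ∈ p.edges) :
    (p.length : ZMod 2) = gp u + gp v + 1 := by
  induction p with
  | nil => simp at hz
  | @cons a b c h q ih =>
    rw [Walk.edges_cons, List.mem_cons] at hz
    rw [Walk.length_cons]
    push_cast
    rcases hz with heq | hz
    · -- head edge is the special edge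
      have hb : gp a = 0 ∧ gp b = 0 := by
        rcases Sym2.eq_iff.mp heq with ⟨ha, hb⟩ | ⟨ha, hb⟩ <;> subst ha <;> subst hb <;>
          exact ⟨rfl, rfl⟩
      have hq : s(Sum.inl (z, false), Sum.inl (z, true)) ∉ q.edges := by
        have := hp.edges_nodup
        rw [Walk.edges_cons, List.nodup_cons] at this
        rw [heq]; exact this.1
      rw [parity_no q hq, hb.1, hb.2]
    · have h1 : gp a + gp b = 1 := by
        refine adj_mixed h (fun hc => ?_)
        have := hp.edges_nodup
        rw [Walk.edges_cons, List.nodup_cons, hc] at this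
        exact this.1 hz
      rw [ih hp.of_cons hz]
      calc (gp b + gp c + 1 : ZMod 2) + 1 = (gp a + gp b) + gp b + gp c + 1 := by
            rw [h1]; ring
        _ = gp a + gp c + 1 := by
            have : gp b + gp b = (0 : ZMod 2) := gp_self_add b
            calc (gp a + gp b) + gp b + gp c + 1 = gp a + (gp b + gp b) + gp c + 1 := by ring
              _ = gp a + gp c + 1 := by rw [this]; ring

lemma odd_iff_cast (n : ℕ) : Odd n ↔ (n : ZMod 2) = 1 := by
  rw [Nat.odd_iff]
  constructor
  · intro h
    rw [← ZMod.natCast_mod, h, Nat.cast_one]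
  · intro h
    rcases Nat.mod_two_eq_zero_or_one n with h0 | h1
    · rw [← ZMod.natCast_mod, h0] at h
      simp at h
    · exact h1

lemma part1 {u : TildeVert V G} (C : (tildeGraph G z).Walk u u) (hC : C.IsCycle) :
    Odd C.length ↔ s(Sum.inl (z, false), Sum.inl (z, true)) ∈ C.edges := by
  constructor
  · intro hodd
    by_contra hmem
    rw [odd_iff_cast, parity_no C hmem, gp_self_add] at hodd
    exact zero_ne_one hodd
  · intro hmem
    rw [odd_iff_cast, parity_yes C hC.isTrail hmem, gp_self_add, zero_add]

section General
variable {W : Type*} {H : SimpleGraph W}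

lemma nil_of_closed_nodup {a : W} (p : H.Walk a a) (hp : p.support.Nodup) :
    p = Walk.nil := by
  cases p with
  | nil => rfl
  | cons h q =>
    exfalso
    rw [Walk.support_cons, List.nodup_cons] at hp
    exact hp.1 q.end_mem_support

lemma mem_tail_of_closed {a x : W} (p : H.Walk a a) (hnil : p ≠ Walk.nil)
    (hx : x ∈ p.support) : x ∈ p.support.tail := by
  cases p with
  | nil => exact absurd rfl hnil
  | cons h q =>
    rw [Walk.support_cons] at hx ⊢
    rw [List.tail_cons]
    rcases List.mem_cons.mp hx with rfl | hx
    · exact q.end_mem_support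
    · exact hx

lemma exists_concat {a b c : W} (p : H.Walk a b) (hp : p.support.Nodup)
    (hm : s(c, b) ∈ p.edges) :
    ∃ (q : H.Walk a c) (h : H.Adj c b), p = q.concat h := by
  induction p with
  | nil => simp at hm
  | @cons a d b h q ih =>
    rw [Walk.edges_cons, List.mem_cons] at hm
    rw [Walk.support_cons, List.nodup_cons] at hp
    rcases hm with heq | hm
    · rcases Sym2.eq_iff.mp heq with ⟨hca, hbd⟩ | ⟨hcd, hba⟩
      · subst hca
        subst hbd
        have : q = Walk.nil := nil_of_closed_nodup q hp.2
        subst this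
        exact ⟨Walk.nil, h, (Walk.concat_nil h).symm⟩
      · exfalso
        subst hba
        exact hp.1 q.end_mem_support
    · obtain ⟨q', h', rfl⟩ := ih hp.2 hm
      exact ⟨Walk.cons h q', h', (Walk.concat_cons h q' h').symm⟩

end General

lemma eq_z_of_adj_true {v : V} {m : TildeVert V G}
    (h : (tildeGraph G z).Adj (Sum.inl (v, true)) m) : v = z := by
  rcases m with ⟨u', b'⟩ | e
  · exact (adj_inl_inl.mp h).1
  · by_contra hv
    exact absurd ((adj_inl_inr.mp h).2 hv) (by simp)

lemma true_mem_support {s t : TildeVert V G} (W : (tildeGraph G z).Walk s t) {v : V}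
    (hm : Sum.inl (v, true) ∈ W.support) :
    v = z ∨ (Sum.inl (v, true) : TildeVert V G) = t := by
  induction W with
  | nil => right; simpa using hm
  | @cons a b c h q ih =>
    rw [Walk.support_cons, List.mem_cons] at hm
    rcases hm with heq | hm
    · subst heq
      exact Or.inl (eq_z_of_adj_true h)
    · exact ih hm

def eDart {a w : V} (h : G.Adj a w) : G.edgeSet := ⟨s(a, w), h⟩

lemma adj_fst {a w : V} (h : G.Adj a w) {b : Bool} (hb : a ≠ z → b = false) :
    (tildeGraph G z).Adj (Sum.inl (a, b)) (Sum.inr (eDart h)) :=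
  adj_inl_inr.mpr ⟨Sym2.mem_mk_left a w, hb⟩

lemma adj_snd {a w : V} (h : G.Adj a w) :
    (tildeGraph G z).Adj (Sum.inr (eDart h)) (Sum.inl (w, false)) :=
  (adj_inl_inr.mpr ⟨Sym2.mem_mk_right a w, fun _ => rfl⟩).symm

def lift (z : V) : ∀ {a b : V}, G.Walk a b →
    (tildeGraph G z).Walk (Sum.inl (a, false)) (Sum.inl (b, false))
  | _, _, Walk.nil => Walk.nil
  | _, _, Walk.cons h p =>
      Walk.cons (adj_fst h (fun _ => rfl)) (Walk.cons (adj_snd h) (lift z p))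

lemma lift_nil {a : V} : lift (G := G) z (Walk.nil : G.Walk a a) = Walk.nil := rfl

lemma lift_cons {a w b : V} (h : G.Adj a w) (p : G.Walk w b) :
    lift (G := G) z (Walk.cons h p) =
      Walk.cons (adj_fst h (fun _ => rfl)) (Walk.cons (adj_snd h) (lift z p)) := rfl

lemma lift_length {a b : V} (p : G.Walk a b) : (lift (G := G) z p).length = 2 * p.length := by
  induction p with
  | nil => rfl
  | cons h q ih => simp [lift_cons, Walk.length_cons, ih]; omega

lemma inl_mem_lift_iff {a b v : V} {bb : Bool} (p : G.Walk a b) :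
    Sum.inl (v, bb) ∈ (lift (G := G) z p).support ↔ v ∈ p.support ∧ bb = false := by
  induction p with
  | nil =>
    rw [lift_nil, Walk.support_nil, Walk.support_nil, List.mem_singleton, List.mem_singleton]
    constructor
    · intro h
      obtain ⟨h1, h2⟩ := Prod.ext_iff.mp (Sum.inl.inj h)
      exact ⟨h1, h2⟩
    · rintro ⟨rfl, rfl⟩; rfl
  | @cons a w b h q ih =>
    simp only [lift_cons, Walk.support_cons, List.mem_cons, Walk.support_cons]
    constructor
    · rintro (h1 | h1 | h1)
      · obtain ⟨h1, h2⟩ := Prod.ext_iff.mp (Sum.inl.inj h1)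
        exact ⟨Or.inl h1, h2⟩
      · exact absurd h1 (by simp)
      · exact ⟨Or.inr (ih.mp h1).1, (ih.mp h1).2⟩
    · rintro ⟨h1 | h1, rfl⟩
      · subst h1; exact Or.inl rfl
      · exact Or.inr (Or.inr (ih.mpr ⟨h1, rfl⟩))

lemma inr_mem_lift_iff {a b : V} {e : G.edgeSet} (p : G.Walk a b) :
    Sum.inr e ∈ (lift (G := G) z p).support ↔ e.val ∈ p.edges := by
  induction p with
  | nil => simp [lift_nil]
  | @cons a w b h q ih =>
    simp only [lift_cons, Walk.support_cons, List.mem_cons, Walk.edges_cons]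
    constructor
    · rintro (h1 | h1 | h1)
      · exact absurd h1 (by simp)
      · obtain rfl := Sum.inr.inj h1
        exact Or.inl rfl
      · exact Or.inr (ih.mp h1)
    · rintro (h1 | h1)
      · have he : e = eDart h := Subtype.ext h1
        exact Or.inr (Or.inl (congrArg Sum.inr he))
      · exact Or.inr (Or.inr (ih.mpr h1))

lemma lift_support_nodup {a b : V} (p : G.Walk a b) (hs : p.support.Nodup)
    (he : p.edges.Nodup) : (lift (G := G) z p).support.Nodup := by
  induction p with
  | nil => simp [lift_nil]
  | @cons a w b h q ih =>
    rw [Walk.support_cons, List.nodup_cons] at hs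
    rw [Walk.edges_cons, List.nodup_cons] at he
    simp only [lift_cons, Walk.support_cons, List.nodup_cons, List.mem_cons]
    refine ⟨?_, ?_, ih hs.2 he.2⟩
    · rintro (h1 | h1)
      · exact absurd h1 (by simp)
      · exact hs.1 ((inl_mem_lift_iff q).mp h1).1
    · intro h1
      exact he.1 ((inr_mem_lift_iff q).mp h1)

lemma lift_edges_shape {a b : V} (p : G.Walk a b) :
    ∀ q ∈ (lift (G := G) z p).edges, ∃ (vb : V × Bool) (e : G.edgeSet),
      q = s(Sum.inl vb, Sum.inr e) := by
  induction p with
  | nil => simp [lift_nil]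
  | @cons a w b h q ih =>
    simp only [lift_cons, Walk.edges_cons, List.mem_cons]
    rintro x (rfl | rfl | hx)
    · exact ⟨(a, false), eDart h, rfl⟩
    · exact ⟨(w, false), eDart h, Sym2.eq_swap⟩
    · exact ih x hx

lemma forward' {x y : V} (hxz : x ≠ z) (hyz : y ≠ z) (D : G.Walk z z) (hD : D.IsCycle)
    (hx : x ∈ D.support) (hy : y ∈ D.support) :
    ∃ (u : TildeVert V G) (C : (tildeGraph G z).Walk u u), C.IsCycle ∧
      Sum.inl (x, false) ∈ C.support ∧ Sum.inl (y, false) ∈ C.support ∧ Odd C.length := by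
  cases D with
  | nil => exact absurd rfl hD.ne_nil
  | @cons _ w _ h p =>
    obtain ⟨hpath, hne⟩ := (Walk.cons_isCycle_iff p h).mp hD
    have s1 : (tildeGraph G z).Adj (Sum.inl (z, true)) (Sum.inr (eDart h)) :=
      adj_fst h (fun hzz => absurd rfl hzz)
    have s2 := adj_snd (z := z) h
    have hz12 : (tildeGraph G z).Adj (Sum.inl (z, false)) (Sum.inl (z, true)) :=
      adj_inl_inl.mpr ⟨rfl, rfl, Bool.false_ne_true⟩
    set W : (tildeGraph G z).Walk (Sum.inl (z, true)) (Sum.inl (z, false)) :=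
      Walk.cons s1 (Walk.cons s2 (lift z p)) with hW
    have hWsup : W.support = Sum.inl (z, true) :: Sum.inr (eDart h) :: (lift z p).support := by
      rw [hW, Walk.support_cons, Walk.support_cons]
    have hWnodup : W.support.Nodup := by
      rw [hWsup, List.nodup_cons, List.nodup_cons]
      refine ⟨?_, ?_, lift_support_nodup p hpath.support_nodup hpath.isTrail.edges_nodup⟩
      · rw [List.mem_cons]
        rintro (h1 | h1)
        · exact absurd h1 (by simp)
        · have := ((inl_mem_lift_iff p).mp h1).2
          simp at this
      · intro h1
        exact hne ((inr_mem_lift_iff p).mp h1)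
    have hshape : ∀ q ∈ W.edges, ∃ (vb : V × Bool) (e : G.edgeSet),
        q = s(Sum.inl vb, Sum.inr e) := by
      rw [hW]
      simp only [Walk.edges_cons, List.mem_cons]
      rintro q (rfl | rfl | hq)
      · exact ⟨(z, true), eDart h, rfl⟩
      · exact ⟨(w, false), eDart h, Sym2.eq_swap⟩
      · exact lift_edges_shape p q hq
    have hzW : s(Sum.inl (z, false), Sum.inl (z, true)) ∉ W.edges := by
      intro hmem
      obtain ⟨vb, e, hq⟩ := hshape _ hmem
      rcases Sym2.eq_iff.mp hq with ⟨h1, h2⟩ | ⟨h1, h2⟩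
      · exact absurd h2 (by simp)
      · exact absurd h1 (by simp)
    refine ⟨Sum.inl (z, false), Walk.cons hz12 W, ?_, ?_, ?_, ?_⟩
    · exact (Walk.cons_isCycle_iff W hz12).mpr ⟨Walk.IsPath.mk' hWnodup, hzW⟩
    · rw [Walk.support_cons, hWsup]
      have hxp : x ∈ p.support := by
        rw [Walk.support_cons] at hx
        rcases List.mem_cons.mp hx with rfl | hx
        · exact absurd rfl hxz
        · exact hx
      simp only [List.mem_cons]
      exact Or.inr (Or.inr (Or.inr ((inl_mem_lift_iff p).mpr ⟨hxp, rfl⟩)))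
    · rw [Walk.support_cons, hWsup]
      have hyp : y ∈ p.support := by
        rw [Walk.support_cons] at hy
        rcases List.mem_cons.mp hy with rfl | hy
        · exact absurd rfl hyz
        · exact hy
      simp only [List.mem_cons]
      exact Or.inr (Or.inr (Or.inr ((inl_mem_lift_iff p).mpr ⟨hyp, rfl⟩)))
    · have : (Walk.cons hz12 W).length = 2 * p.length + 3 := by
        rw [Walk.length_cons, hW, Walk.length_cons, Walk.length_cons, lift_length]
      rw [this]
      exact ⟨p.length + 1, by omega⟩

lemma forward {x y : V} (hxz : x ≠ z) (hyz : y ≠ z)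
    (hex : ∃ (u : V) (C : G.Walk u u), C.IsCycle ∧ x ∈ C.support ∧ y ∈ C.support ∧
      z ∈ C.support) :
    ∃ (u : TildeVert V G) (C : (tildeGraph G z).Walk u u), C.IsCycle ∧
      Sum.inl (x, false) ∈ C.support ∧ Sum.inl (y, false) ∈ C.support ∧ Odd C.length := by
  classical
  obtain ⟨u, C, hC, hx, hy, hz⟩ := hex
  have hCnil : C ≠ Walk.nil := hC.ne_nil
  have hmem : ∀ v : V, v ∈ C.support → v ∈ (C.rotate _ hz).support := by
    intro v hv
    have h1 : v ∈ C.support.tail := mem_tail_of_closed C hCnil hv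
    have h2 := (Walk.support_rotate C _ hz).mem_iff (a := v)
    exact List.mem_of_mem_tail (h2.mpr h1)
  exact forward' hxz hyz (C.rotate _ hz) (hC.rotate hz) (hmem x hx) (hmem y hy)

def fV : TildeVert V G → Option V
  | Sum.inl p => some p.1
  | Sum.inr _ => none

def fE : TildeVert V G → Option (Sym2 V)
  | Sum.inl _ => none
  | Sum.inr e => some e.val

lemma fV_inl (p : V × Bool) : fV (G := G) (Sum.inl p) = some p.1 := rfl
lemma fV_inr (e : G.edgeSet) : fV (Sum.inr e) = none := rfl
lemma fE_inl (p : V × Bool) : fE (G := G) (Sum.inl p) = none := rfl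
lemma fE_inr (e : G.edgeSet) : fE (Sum.inr e) = some e.val := rfl

lemma project : ∀ (n : ℕ) {a : V}, a ≠ z →
    ∀ (P : (tildeGraph G z).Walk (Sum.inl (a, false)) (Sum.inl (z, true))),
    P.length ≤ n → P.support.Nodup →
    (Sum.inl (z, false) : TildeVert V G) ∉ P.support →
    s(Sum.inl (z, false), Sum.inl (z, true)) ∉ P.edges →
    (∀ v : V, (Sum.inl (v, true) : TildeVert V G) ∈ P.support → v = z) →
    ∃ Q : G.Walk a z, Q.support = P.support.filterMap fV ∧
      Q.edges = P.support.filterMap fE ∧ Q.support.Nodup := by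
  intro n
  induction n with
  | zero =>
    intro a ha P hlen _ _ _ _
    exfalso
    have := Walk.eq_of_length_eq_zero (Nat.le_zero.mp hlen)
    have h2 : (a, false) = (z, true) := Sum.inl.inj this
    simpa using (Prod.ext_iff.mp h2).2
  | succ n ih =>
    intro a ha P hlen hnodup hz1 hzE hiso
    cases P with
    | @cons _ m _ h₁ P₁ =>
      rcases m with ⟨v, b⟩ | e
      · exact absurd (adj_inl_inl.mp h₁).1 ha
      · have hae : a ∈ e.val := (adj_inl_inr.mp h₁).1
        cases P₁ with
        | @cons _ m₂ _ h₂ P₂ =>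
          rcases m₂ with ⟨c, bc⟩ | e'
          swap
          · exact absurd h₂ not_adj_inr_inr
          have hce : c ∈ e.val := (adj_inl_inr.mp h₂.symm).1
          have hbc := (adj_inl_inr.mp h₂.symm).2
          rw [Walk.support_cons, Walk.support_cons] at hnodup hz1 hiso
          rw [Walk.edges_cons, Walk.edges_cons] at hzE
          rcases bc with _ | _
          · -- bc = false : genuine step
            have hm₂ : (Sum.inl (c, false) : TildeVert V G) ∈ P₂.support :=
              P₂.start_mem_support
            have hcz : c ≠ z := by
              rintro rfl
              exact hz1 (by simp [hm₂])
            have hac : a ≠ c := by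
              rintro rfl
              exact (List.nodup_cons.mp hnodup).1 (by simp [hm₂])
            have heval : e.val = s(a, c) := (Sym2.mem_and_mem_iff hac).mp ⟨hae, hce⟩
            have hadj : G.Adj a c := by
              have := e.prop
              rw [heval, SimpleGraph.mem_edgeSet] at this
              exact this
            have hlen2 : P₂.length ≤ n := by
              rw [Walk.length_cons, Walk.length_cons] at hlen
              omega
            obtain ⟨Q', hQs, hQe, hQn⟩ :=
              ih hcz P₂ hlen2 ((List.nodup_cons.mp (List.nodup_cons.mp hnodup).2).2)
                (fun hm => hz1 (by simp [hm]))
                (fun hm => hzE (by simp [hm]))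
                (fun v hv => hiso v (by simp [hv]))
            refine ⟨Walk.cons hadj Q', ?_, ?_, ?_⟩
            · simp [Walk.support_cons, hQs, List.filterMap_cons, fV_inl, fV_inr]
            · simp [Walk.edges_cons, Walk.support_cons, hQe, List.filterMap_cons,
                fE_inl, fE_inr, heval]
            · rw [Walk.support_cons, List.nodup_cons]
              refine ⟨?_, hQn⟩
              rw [hQs]
              intro hmem
              obtain ⟨m, hm, hfm⟩ := List.mem_filterMap.mp hmem
              rcases m with ⟨v', b'⟩ | e''
              · have hv' : v' = a := by
                  have : some v' = some a := by
                    rw [← fV_inl (G := G) (v', b')]; exact hfm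
                  exact Option.some.inj this
                subst hv'
                rcases b' with _ | _
                · exact (List.nodup_cons.mp hnodup).1 (by simp [hm])
                · exact ha (hiso v' (by simp [hm]))
              · exact absurd hfm (by rw [fV_inr]; simp)
          · -- bc = true : last step, c = z
            have hcz : c = z := by
              by_contra hc
              simpa using hbc hc
            subst hcz
            have hP₂ : P₂ = Walk.nil :=
              nil_of_closed_nodup P₂ ((List.nodup_cons.mp (List.nodup_cons.mp hnodup).2).2)
            subst hP₂
            have heval : e.val = s(a, c) := (Sym2.mem_and_mem_iff ha).mp ⟨hae, hce⟩
            have hadj : G.Adj a c := by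
              have := e.prop
              rw [heval, SimpleGraph.mem_edgeSet] at this
              exact this
            refine ⟨Walk.cons hadj Walk.nil, ?_, ?_, ?_⟩
            · simp [Walk.support_cons, Walk.support_nil, List.filterMap_cons, fV_inl, fV_inr]
            · simp [Walk.edges_cons, Walk.edges_nil, Walk.support_cons, Walk.support_nil,
                List.filterMap_cons, fE_inl, fE_inr, heval]
            · simp [Walk.support_cons, Walk.support_nil, ha]

lemma backcont {x y : V} (hxz : x ≠ z) (hyz : y ≠ z)
    (P : (tildeGraph G z).Walk (Sum.inl (z, false)) (Sum.inl (z, true)))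
    (hnodup : P.support.Nodup)
    (hzE : s(Sum.inl (z, false), Sum.inl (z, true)) ∉ P.edges)
    (hx : Sum.inl (x, false) ∈ P.support) (hy : Sum.inl (y, false) ∈ P.support) :
    ∃ (u : V) (C : G.Walk u u), C.IsCycle ∧ x ∈ C.support ∧ y ∈ C.support ∧
      z ∈ C.support := by
  have hiso : ∀ v : V, (Sum.inl (v, true) : TildeVert V G) ∈ P.support → v = z := by
    intro v hv
    rcases true_mem_support P hv with h | h
    · exact h
    · exact (Prod.ext_iff.mp (Sum.inl.inj h)).1
  cases P with
  | @cons _ m _ h₁ P₁ =>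
    rcases m with ⟨v, b⟩ | e
    · -- first edge is the z-edge: contradiction
      obtain ⟨-, hv, hb⟩ := adj_inl_inl.mp h₁
      subst hv
      have hb' : b = true := by
        rcases b with _ | _
        · exact absurd rfl hb
        · rfl
      subst hb'
      exact absurd (by rw [Walk.edges_cons]; exact List.mem_cons_self) hzE
    · have hze : z ∈ e.val := (adj_inl_inr.mp h₁).1
      cases P₁ with
      | @cons _ m₂ _ h₂ P₂ =>
        rcases m₂ with ⟨c, bc⟩ | e'
        swap
        · exact absurd h₂ not_adj_inr_inr
        have hce : c ∈ e.val := (adj_inl_inr.mp h₂.symm).1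
        rw [Walk.support_cons, Walk.support_cons] at hnodup hx hy hiso
        rw [Walk.edges_cons, Walk.edges_cons] at hzE
        rcases bc with _ | _
        · -- genuine first step
          have hm₂ : (Sum.inl (c, false) : TildeVert V G) ∈ P₂.support :=
            P₂.start_mem_support
          have hcz : c ≠ z := by
            rintro rfl
            exact (List.nodup_cons.mp hnodup).1 (by simp [hm₂])
          have heval : e.val = s(z, c) := (Sym2.mem_and_mem_iff (Ne.symm hcz)).mp ⟨hze, hce⟩
          have hadj : G.Adj z c := by
            have := e.prop
            rw [heval, SimpleGraph.mem_edgeSet] at this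
            exact this
          have hnP₂ : P₂.support.Nodup :=
            (List.nodup_cons.mp (List.nodup_cons.mp hnodup).2).2
          obtain ⟨Q', hQs, hQe, hQn⟩ :=
            project P₂.length hcz P₂ le_rfl hnP₂
              (fun hm => (List.nodup_cons.mp hnodup).1 (by simp [hm]))
              (fun hm => hzE (by simp [hm]))
              (fun v hv => hiso v (by simp [hv]))
          have hQedge : s(z, c) ∉ Q'.edges := by
            rw [hQe]
            intro hmem
            obtain ⟨m, hm, hfm⟩ := List.mem_filterMap.mp hmem
            rcases m with ⟨v', b'⟩ | e''
            · exact absurd hfm (by rw [fE_inl]; simp)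
            · have : e'' = e := by
                apply Subtype.ext
                have h1 : some e''.val = some s(z, c) := by
                  rw [← fE_inr (G := G) e'']; exact hfm
                rw [Option.some.inj h1, heval]
              subst this
              exact (List.nodup_cons.mp (List.nodup_cons.mp hnodup).2).1 hm
          refine ⟨z, Walk.cons hadj Q', ?_, ?_, ?_, ?_⟩
          · exact (Walk.cons_isCycle_iff Q' hadj).mpr ⟨Walk.IsPath.mk' hQn, hQedge⟩
          · rw [Walk.support_cons, List.mem_cons]
            right
            rw [hQs]
            have hxP : (Sum.inl (x, false) : TildeVert V G) ∈ P₂.support := by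
              rcases List.mem_cons.mp hx with h | h
              · exact absurd ((Prod.ext_iff.mp (Sum.inl.inj h)).1) hxz
              · rcases List.mem_cons.mp h with h | h
                · exact absurd h (by simp)
                · exact h
            exact List.mem_filterMap.mpr ⟨_, hxP, fV_inl (x, false)⟩
          · rw [Walk.support_cons, List.mem_cons]
            right
            rw [hQs]
            have hyP : (Sum.inl (y, false) : TildeVert V G) ∈ P₂.support := by
              rcases List.mem_cons.mp hy with h | h
              · exact absurd ((Prod.ext_iff.mp (Sum.inl.inj h)).1) hyz
              · rcases List.mem_cons.mp h with h | h
                · exact absurd h (by simp)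
                · exact h
            exact List.mem_filterMap.mpr ⟨_, hyP, fV_inl (y, false)⟩
          · rw [Walk.support_cons, List.mem_cons]
            exact Or.inl rfl
        · -- degenerate triangle: contradiction with x in support
          have hcz : c = z := hiso c (by simp [P₂.start_mem_support])
          subst hcz
          have hP₂ : P₂ = Walk.nil :=
            nil_of_closed_nodup P₂ ((List.nodup_cons.mp (List.nodup_cons.mp hnodup).2).2)
          subst hP₂
          exfalso
          rcases List.mem_cons.mp hx with h | h
          · exact hxz (Prod.ext_iff.mp (Sum.inl.inj h)).1
          · rcases List.mem_cons.mp h with h | h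
            · exact absurd h (by simp)
            · rw [Walk.support_nil, List.mem_singleton] at h
              exact hxz (Prod.ext_iff.mp (Sum.inl.inj h)).1

lemma backward {x y : V} (hxz : x ≠ z) (hyz : y ≠ z)
    (hex : ∃ (u : TildeVert V G) (C : (tildeGraph G z).Walk u u), C.IsCycle ∧
      Sum.inl (x, false) ∈ C.support ∧ Sum.inl (y, false) ∈ C.support ∧ Odd C.length) :
    ∃ (u : V) (C : G.Walk u u), C.IsCycle ∧ x ∈ C.support ∧ y ∈ C.support ∧
      z ∈ C.support := by
  classical
  obtain ⟨u, C, hC, hx, hy, hodd⟩ := hex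
  have hzE : s(Sum.inl (z, false), Sum.inl (z, true)) ∈ C.edges := (part1 C hC).mp hodd
  have hz1 : (Sum.inl (z, false) : TildeVert V G) ∈ C.support :=
    Walk.fst_mem_support_of_mem_edges C hzE
  obtain ⟨D, hD, hzED, hxD, hyD⟩ :
      ∃ D : (tildeGraph G z).Walk (Sum.inl (z, false)) (Sum.inl (z, false)),
        D.IsCycle ∧ s(Sum.inl (z, false), Sum.inl (z, true)) ∈ D.edges ∧
        Sum.inl (x, false) ∈ D.support ∧ Sum.inl (y, false) ∈ D.support := by
    refine ⟨C.rotate _ hz1, hC.rotate hz1, (Walk.rotate_edges C _ hz1).mem_iff.mpr hzE, ?_, ?_⟩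
    · exact List.mem_of_mem_tail
        ((Walk.support_rotate C _ hz1).mem_iff.mpr (mem_tail_of_closed C hC.ne_nil hx))
    · exact List.mem_of_mem_tail
        ((Walk.support_rotate C _ hz1).mem_iff.mpr (mem_tail_of_closed C hC.ne_nil hy))
  cases D with
  | nil => exact absurd rfl hD.ne_nil
  | @cons _ m _ h' q' =>
    obtain ⟨hq'path, hfirst⟩ := (Walk.cons_isCycle_iff q' h').mp hD
    rw [Walk.edges_cons] at hzED
    rw [Walk.support_cons] at hxD hyD
    rcases List.mem_cons.mp hzED with heq | hmem'
    · -- the z-edge is the first edge, so m = z₂ and q'.reverse works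
      have hm : m = Sum.inl (z, true) := by
        rcases Sym2.eq_iff.mp heq with ⟨-, h2⟩ | ⟨h1, h2⟩
        · exact h2.symm
        · exfalso
          have := (Prod.ext_iff.mp (Sum.inl.inj h2)).2
          simp at this
      subst hm
      apply backcont hxz hyz q'.reverse
      · rw [Walk.support_reverse]
        exact List.nodup_reverse.mpr hq'path.support_nodup
      · rw [Walk.edges_reverse]
        intro hmem
        rw [List.mem_reverse] at hmem
        exact hfirst hmem
      · rw [Walk.support_reverse, List.mem_reverse]
        rcases List.mem_cons.mp hxD with h | h
        · exact absurd (Prod.ext_iff.mp (Sum.inl.inj h)).1 hxz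
        · exact h
      · rw [Walk.support_reverse, List.mem_reverse]
        rcases List.mem_cons.mp hyD with h | h
        · exact absurd (Prod.ext_iff.mp (Sum.inl.inj h)).1 hyz
        · exact h
    · -- the z-edge is the last edge
      have hmemHold := hmem'
      rw [Sym2.eq_swap] at hmem'
      obtain ⟨r, h₂, rfl⟩ := exists_concat q' hq'path.support_nodup hmem'
      have hsup := hq'path.support_nodup
      rw [Walk.support_concat] at hsup
      have hrn : r.support.Nodup := (List.nodup_append.mp hsup).1
      have hz1r : (Sum.inl (z, false) : TildeVert V G) ∉ r.support := by
        intro hmem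
        have := (List.nodup_append.mp hsup).2.2
        exact this _ hmem _ (List.mem_singleton_self _) rfl
      apply backcont hxz hyz (Walk.cons h' r)
      · rw [Walk.support_cons, List.nodup_cons]
        exact ⟨hz1r, hrn⟩
      · rw [Walk.edges_cons]
        intro hmem
        rcases List.mem_cons.mp hmem with h | h
        · exact hfirst (h ▸ hmemHold)
        · have hed := hq'path.isTrail.edges_nodup
          rw [Walk.edges_concat, List.concat_eq_append, List.nodup_append] at hed
          rw [Sym2.eq_swap] at h
          exact hed.2.2 _ h _ (List.mem_singleton_self _) rfl
      · rw [Walk.support_cons, List.mem_cons]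
        rcases List.mem_cons.mp hxD with h | h
        · exact absurd (Prod.ext_iff.mp (Sum.inl.inj h)).1 hxz
        · rw [Walk.support_concat, List.mem_append] at h
          rcases h with h | h
          · exact Or.inr h
          · rw [List.mem_singleton] at h
            exact absurd (Prod.ext_iff.mp (Sum.inl.inj h)).1 hxz
      · rw [Walk.support_cons, List.mem_cons]
        rcases List.mem_cons.mp hyD with h | h
        · exact absurd (Prod.ext_iff.mp (Sum.inl.inj h)).1 hyz
        · rw [Walk.support_concat, List.mem_append] at h
          rcases h with h | h
          · exact Or.inr h
          · rw [List.mem_singleton] at h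
            exact absurd (Prod.ext_iff.mp (Sum.inl.inj h)).1 hyz

end Stmt16Aux


theorem stmt_16 {V : Type*} (G : SimpleGraph V) (x y z : V)
    (hxy : x ≠ y) (hxz : x ≠ z) (hyz : y ≠ z) :
    (∀ (u : TildeVert V G) (C : (tildeGraph G z).Walk u u), C.IsCycle →
        (Odd C.length ↔
          s(Sum.inl (z, false), Sum.inl (z, true)) ∈ C.edges)) ∧
      ((∃ (u : V) (C : G.Walk u u), C.IsCycle ∧ x ∈ C.support ∧ y ∈ C.support ∧
          z ∈ C.support) ↔
        (∃ (u : TildeVert V G) (C : (tildeGraph G z).Walk u u), C.IsCycle ∧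
          Sum.inl (x, false) ∈ C.support ∧ Sum.inl (y, false) ∈ C.support ∧
          Odd C.length)) := by
  exact ⟨fun u C hC => Stmt16Aux.part1 C hC,
    ⟨fun h => Stmt16Aux.forward hxz hyz h, fun h => Stmt16Aux.backward hxz hyz h⟩⟩
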